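/- For any fixed realized sequence of drawn arms x^1,…,x^T ∈ F, the MABSTA weights satisfy ln(W_{T+1}/W_1) ≤ (α/(1−γ))·R̂_total + ((e−2)α²/(1−γ))·(|E|/M^{N−2})·Σ_{t=1}^T Σ_{y∈F} R̂_y(t), where R̂_total = Σ_{t=1}^T (Σ_{i=1}^N R_i^{(x^t_i)}(t) + Σ_{(m,n)∈E} R_{mn}^{(x^t_m x^t_n)}(t)). -/

import Mathlib

open Finset

private lemma exp_le_quad' {x : ℝ} (h0 : 0 ≤ x) (h1 : x ≤ 1) :
    Real.exp x ≤ 1 + x + (3/4) * x^2 := by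
  have h := Real.exp_bound' h0 h1 (n := 2) (by norm_num)
  simp [Finset.sum_range_succ] at h
  nlinarith [h]

private lemma card_one_coord' {N M : ℕ} (i : Fin N) (c : Fin M) :
    (Finset.univ.filter (fun z : Fin N → Fin M => z i = c)).card = M ^ (N - 1) := by
  classical
  have hset : Finset.univ.filter (fun z : Fin N → Fin M => z i = c)
      = Fintype.piFinset (fun j => if j = i then {c} else Finset.univ) := by
    ext z
    simp only [mem_filter, mem_univ, true_and, Fintype.mem_piFinset]
    constructor
    · intro h j
      by_cases hj : j = i
      · subst hj; simp [h]
      · simp [hj]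
    · intro h
      have := h i
      simpa using this
  rw [hset, Fintype.card_piFinset]
  have h1 : ∀ j : Fin N, ((if j = i then ({c} : Finset (Fin M)) else Finset.univ)).card
      = if j = i then 1 else M := by
    intro j; by_cases hj : j = i <;> simp [hj]
  calc (∏ j, ((if j = i then ({c} : Finset (Fin M)) else Finset.univ)).card)
      = ∏ j, (if j = i then 1 else M) := Finset.prod_congr rfl (fun j _ => h1 j)
    _ = (if i = i then 1 else M) * ∏ j ∈ Finset.univ.erase i, (if j = i then 1 else M) :=
        (Finset.mul_prod_erase _ _ (mem_univ i)).symm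
    _ = ∏ j ∈ Finset.univ.erase i, M := by
        rw [if_pos rfl, one_mul]
        exact Finset.prod_congr rfl (fun j hj => if_neg (Finset.ne_of_mem_erase hj))
    _ = M ^ (N - 1) := by
        rw [Finset.prod_const, Finset.card_erase_of_mem (mem_univ i), Finset.card_univ,
          Fintype.card_fin]

private lemma card_two_coord' {N M : ℕ} {m n : Fin N} (hmn : m ≠ n) (c c' : Fin M) :
    (Finset.univ.filter (fun z : Fin N → Fin M => z m = c ∧ z n = c')).card = M ^ (N - 2) := by
  classical
  have hset : Finset.univ.filter (fun z : Fin N → Fin M => z m = c ∧ z n = c')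
      = Fintype.piFinset (fun j => if j = m then {c} else if j = n then {c'} else Finset.univ) := by
    ext z
    simp only [mem_filter, mem_univ, true_and, Fintype.mem_piFinset]
    constructor
    · intro h j
      by_cases hj : j = m
      · subst hj; simp [h.1]
      · by_cases hj' : j = n
        · subst hj'; simp [hj, h.2]
        · simp [hj, hj']
    · intro h
      have h1 := h m
      have h2 := h n
      rw [if_pos rfl] at h1
      rw [if_neg (Ne.symm hmn), if_pos rfl] at h2
      exact ⟨by simpa using h1, by simpa using h2⟩
  rw [hset, Fintype.card_piFinset]
  have h1 : ∀ j : Fin N,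
      ((if j = m then ({c} : Finset (Fin M)) else if j = n then {c'} else Finset.univ)).card
      = if j = m then 1 else if j = n then 1 else M := by
    intro j
    by_cases hj : j = m
    · simp [hj]
    · by_cases hj' : j = n
      · subst hj'; rw [if_neg hj, if_neg hj, if_pos rfl, if_pos rfl]; simp
      · simp [hj, hj']
  have hnm : n ∈ Finset.univ.erase m := Finset.mem_erase.2 ⟨Ne.symm hmn, mem_univ n⟩
  calc (∏ j, ((if j = m then ({c} : Finset (Fin M)) else if j = n then {c'} else Finset.univ)).card)
      = ∏ j, (if j = m then 1 else if j = n then 1 else M) :=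
        Finset.prod_congr rfl (fun j _ => h1 j)
    _ = (if m = m then 1 else if m = n then 1 else M)
          * ∏ j ∈ Finset.univ.erase m, (if j = m then 1 else if j = n then 1 else M) :=
        (Finset.mul_prod_erase _ _ (mem_univ m)).symm
    _ = ∏ j ∈ Finset.univ.erase m, (if j = m then 1 else if j = n then 1 else M) := by
        rw [if_pos rfl, one_mul]
    _ = (if n = m then 1 else if n = n then 1 else M)
          * ∏ j ∈ (Finset.univ.erase m).erase n, (if j = m then 1 else if j = n then 1 else M) :=
        (Finset.mul_prod_erase _ _ hnm).symm
    _ = ∏ j ∈ (Finset.univ.erase m).erase n, M := by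
        rw [if_neg (Ne.symm hmn), if_pos rfl, one_mul]
        refine Finset.prod_congr rfl (fun j hj => ?_)
        have hj1 : j ≠ n := Finset.ne_of_mem_erase hj
        have hj2 : j ≠ m := Finset.ne_of_mem_erase (Finset.mem_of_mem_erase hj)
        rw [if_neg hj2, if_neg hj1]
    _ = M ^ (N - 2) := by
        rw [Finset.prod_const, Finset.card_erase_of_mem hnm,
          Finset.card_erase_of_mem (mem_univ m), Finset.card_univ, Fintype.card_fin,
          Nat.sub_sub]

set_option maxHeartbeats 3200000 in
/-- **eq. (19) of the paper.**
For any fixed realized sequence of drawn arms `x^1,…,x^T ∈ F`, the MABSTA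
weights satisfy
`ln(W_{T+1}/W_1) ≤ (α/(1−γ))·R̂_total
  + ((e−2)α²/(1−γ))·(|E|/M^{N−2})·Σ_{t=1}^T Σ_{y∈F} R̂_y(t)`. -/
theorem mabsta_log_weight_upper_bound
    (N M T : ℕ) (hN : 2 ≤ N) (hM : 3 ≤ M) (hT : 1 ≤ T)
    (E : Finset (Fin N × Fin N)) (hE : ∀ e ∈ E, e.1 ≠ e.2) (hEcard : 3 ≤ E.card)
    (γ : ℝ) (hγ0 : 0 < γ) (hγ1 : γ < 1)
    (α : ℝ) (hα : α = γ / ((M : ℝ) * ((N : ℝ) + (E.card : ℝ) * (M : ℝ))))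
    (R : Fin T → Fin N → Fin M → ℝ)
    (hR : ∀ t i j, R t i j ∈ Set.Icc (0 : ℝ) 1)
    (Re : Fin T → Fin N × Fin N → Fin M → Fin M → ℝ)
    (hRe : ∀ t, ∀ e ∈ E, ∀ j k, Re t e j k ∈ Set.Icc (0 : ℝ) 1)
    (xs : Fin T → Fin N → Fin M)
    (w : ℕ → (Fin N → Fin M) → ℝ)
    (hw0 : ∀ y, w 0 y = 1)
    (p : Fin T → (Fin N → Fin M) → ℝ)
    (hp : ∀ (t : Fin T) (y : Fin N → Fin M), p t y =
      (1 - γ) * (w t y / ∑ z : Fin N → Fin M, w t z) + γ / (M : ℝ) ^ N)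
    (Rhat : Fin T → Fin N → Fin M → ℝ)
    (hRhat : ∀ (t : Fin T) (i : Fin N) (j : Fin M), Rhat t i j =
      if j = xs t i then
        R t i j /
          (∑ z ∈ Finset.univ.filter (fun z : Fin N → Fin M => z i = xs t i), p t z)
      else 0)
    (Rhate : Fin T → Fin N × Fin N → Fin M → Fin M → ℝ)
    (hRhate : ∀ (t : Fin T), ∀ e ∈ E, ∀ j k : Fin M, Rhate t e j k =
      if j = xs t e.1 ∧ k = xs t e.2 then
        Re t e j k /
          (∑ z ∈ Finset.univ.filter
            (fun z : Fin N → Fin M => z e.1 = xs t e.1 ∧ z e.2 = xs t e.2), p t z)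
      else 0)
    (RhatArm : Fin T → (Fin N → Fin M) → ℝ)
    (hRhatArm : ∀ (t : Fin T) (y : Fin N → Fin M), RhatArm t y =
      ∑ i, Rhat t i (y i) + ∑ e ∈ E, Rhate t e (y e.1) (y e.2))
    (hwrec : ∀ (t : Fin T) (y : Fin N → Fin M),
      w (t + 1) y = w t y * Real.exp (α * RhatArm t y)) :
    Real.log ((∑ y : Fin N → Fin M, w T y) / (∑ y : Fin N → Fin M, w 0 y))
      ≤ α / (1 - γ)
          * (∑ t, (∑ i, R t i (xs t i) + ∑ e ∈ E, Re t e (xs t e.1) (xs t e.2)))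
        + (Real.exp 1 - 2) * α ^ 2 / (1 - γ) * ((E.card : ℝ) / (M : ℝ) ^ (N - 2))
            * ∑ t, ∑ y : Fin N → Fin M, RhatArm t y := by
  classical
  haveI : NeZero M := ⟨by omega⟩
  have hM0 : (0:ℝ) < M := by exact_mod_cast (by omega : 0 < M)
  have hMR : (3:ℝ) ≤ (M:ℝ) := by exact_mod_cast hM
  have hN0 : (0:ℝ) < N := by exact_mod_cast (by omega : 0 < N)
  have hcE0 : (0:ℝ) ≤ (E.card : ℝ) := Nat.cast_nonneg _
  have h1γ : (0:ℝ) < 1 - γ := by linarith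
  have hNEM : (0:ℝ) < (N:ℝ) + (E.card:ℝ) * M := by nlinarith
  have hden : (0:ℝ) < (M:ℝ) * ((N:ℝ) + (E.card:ℝ) * M) := mul_pos hM0 hNEM
  have hα0 : 0 < α := hα ▸ div_pos hγ0 hden
  -- positivity of weights
  have hwpos : ∀ n : ℕ, n ≤ T → ∀ y : Fin N → Fin M, 0 < w n y := by
    intro n
    induction n with
    | zero => intro _ y; rw [hw0]; norm_num
    | succ k ih =>
      intro hk y
      have hkT : k < T := hk
      have := hwrec ⟨k, hkT⟩ y
      simp only [Fin.val_mk] at this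
      rw [this]
      exact mul_pos (ih hkT.le y) (Real.exp_pos _)
  have hWpos : ∀ n : ℕ, n ≤ T → 0 < ∑ y : Fin N → Fin M, w n y := by
    intro n hn
    exact Finset.sum_pos (fun y _ => hwpos n hn y) univ_nonempty
  -- per-step bound
  have key : ∀ t : Fin T,
      Real.log (∑ y : Fin N → Fin M, w ((t:ℕ)+1) y)
        - Real.log (∑ y : Fin N → Fin M, w (t:ℕ) y)
      ≤ α / (1-γ) * (∑ i, R t i (xs t i) + ∑ e ∈ E, Re t e (xs t e.1) (xs t e.2)) := by
    intro t
    have htT : (t : ℕ) ≤ T := t.isLt.le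
    have hW0 : 0 < ∑ z : Fin N → Fin M, w (t:ℕ) z := hWpos _ htT
    have hpge : ∀ z : Fin N → Fin M, γ / (M:ℝ)^N ≤ p t z := by
      intro z
      rw [hp]
      have h1 : 0 ≤ (1-γ) * (w (t:ℕ) z / ∑ z' : Fin N → Fin M, w (t:ℕ) z') :=
        mul_nonneg h1γ.le (div_nonneg (hwpos _ htT z).le hW0.le)
      linarith
    have hc0 : 0 < γ / (M:ℝ)^N := div_pos hγ0 (pow_pos hM0 N)
    have hpp : ∀ z : Fin N → Fin M, 0 < p t z := fun z => lt_of_lt_of_le hc0 (hpge z)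
    set Q1 : Fin N → ℝ :=
      fun i => ∑ z ∈ Finset.univ.filter (fun z : Fin N → Fin M => z i = xs t i), p t z
      with hQ1
    set Q2 : Fin N × Fin N → ℝ :=
      fun e => ∑ z ∈ Finset.univ.filter
        (fun z : Fin N → Fin M => z e.1 = xs t e.1 ∧ z e.2 = xs t e.2), p t z
      with hQ2
    have hQ1pos : ∀ i, 0 < Q1 i := by
      intro i
      simp only [hQ1]
      refine Finset.sum_pos (fun z _ => hpp z) ⟨xs t, ?_⟩
      simp
    have hQ2pos : ∀ e : Fin N × Fin N, 0 < Q2 e := by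
      intro e
      simp only [hQ2]
      refine Finset.sum_pos (fun z _ => hpp z) ⟨xs t, ?_⟩
      simp
    have hpow1 : (M:ℝ)^N = (M:ℝ)^(N-1) * M := by
      rw [← pow_succ]; congr 1; omega
    have hpow2 : (M:ℝ)^N = (M:ℝ)^(N-2) * (M:ℝ)^2 := by
      rw [← pow_add]; congr 1; omega
    have hQ1ge : ∀ i, γ / (M:ℝ) ≤ Q1 i := by
      intro i
      have hle : ∑ z ∈ Finset.univ.filter (fun z : Fin N → Fin M => z i = xs t i), γ/(M:ℝ)^N
          ≤ Q1 i := by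
        simp only [hQ1]
        exact Finset.sum_le_sum (fun z _ => hpge z)
      rw [Finset.sum_const, card_one_coord' i (xs t i), nsmul_eq_mul] at hle
      push_cast at hle
      calc γ / (M:ℝ) = (M:ℝ)^(N-1) * (γ/(M:ℝ)^N) := by
            rw [hpow1]
            field_simp
          _ ≤ Q1 i := hle
    have hQ2ge : ∀ e ∈ E, γ / (M:ℝ)^2 ≤ Q2 e := by
      intro e he
      have hle : ∑ z ∈ Finset.univ.filter
            (fun z : Fin N → Fin M => z e.1 = xs t e.1 ∧ z e.2 = xs t e.2), γ/(M:ℝ)^N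
          ≤ Q2 e := by
        simp only [hQ2]
        exact Finset.sum_le_sum (fun z _ => hpge z)
      rw [Finset.sum_const, card_two_coord' (hE e he) (xs t e.1) (xs t e.2), nsmul_eq_mul] at hle
      push_cast at hle
      calc γ / (M:ℝ)^2 = (M:ℝ)^(N-2) * (γ/(M:ℝ)^N) := by
            rw [hpow2]
            field_simp
          _ ≤ Q2 e := hle
    set v : Fin N → ℝ := fun i => Rhat t i (xs t i) with hv
    set u : Fin N × Fin N → ℝ := fun e => Rhate t e (xs t e.1) (xs t e.2) with hu
    have hvQ : ∀ i, v i = R t i (xs t i) / Q1 i := by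
      intro i
      simp only [hv, hQ1]
      rw [hRhat, if_pos rfl]
    have huQ : ∀ e ∈ E, u e = Re t e (xs t e.1) (xs t e.2) / Q2 e := by
      intro e he
      simp only [hu, hQ2]
      rw [hRhate t e he, if_pos ⟨rfl, rfl⟩]
    have hv0 : ∀ i, 0 ≤ v i := by
      intro i; rw [hvQ i]; exact div_nonneg (hR t i _).1 (hQ1pos i).le
    have hu0 : ∀ e ∈ E, 0 ≤ u e := by
      intro e he; rw [huQ e he]; exact div_nonneg (hRe t e he _ _).1 (hQ2pos e).le
    have hvQmul : ∀ i, v i * Q1 i = R t i (xs t i) := by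
      intro i; rw [hvQ i, div_mul_cancel₀ _ (ne_of_gt (hQ1pos i))]
    have huQmul : ∀ e ∈ E, u e * Q2 e = Re t e (xs t e.1) (xs t e.2) := by
      intro e he; rw [huQ e he, div_mul_cancel₀ _ (ne_of_gt (hQ2pos e))]
    have hv1 : ∀ i, v i ≤ (M:ℝ) / γ := by
      intro i
      rw [hvQ i, div_le_div_iff₀ (hQ1pos i) hγ0]
      have h1 := (hR t i (xs t i)).2
      have h2 := hQ1ge i
      have h3 : (M:ℝ) * (γ/M) ≤ M * Q1 i := by
        exact mul_le_mul_of_nonneg_left h2 hM0.le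
      rw [mul_div_cancel₀ _ (ne_of_gt hM0)] at h3
      nlinarith
    have hu1 : ∀ e ∈ E, u e ≤ (M:ℝ)^2 / γ := by
      intro e he
      rw [huQ e he, div_le_div_iff₀ (hQ2pos e) hγ0]
      have h1 := (hRe t e he (xs t e.1) (xs t e.2)).2
      have h2 := hQ2ge e he
      have h3 : (M:ℝ)^2 * (γ/(M:ℝ)^2) ≤ (M:ℝ)^2 * Q2 e :=
        mul_le_mul_of_nonneg_left h2 (by positivity)
      rw [mul_div_cancel₀ _ (by positivity : ((M:ℝ)^2) ≠ 0)] at h3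
      nlinarith
    have hRhat_eq : ∀ i j, Rhat t i j = if j = xs t i then v i else 0 := by
      intro i j
      by_cases hj : j = xs t i
      · rw [if_pos hj, hRhat, if_pos hj, hj, hvQ i]
      · rw [if_neg hj, hRhat, if_neg hj]
    have hRhate_eq : ∀ e ∈ E, ∀ j k,
        Rhate t e j k = if (j = xs t e.1 ∧ k = xs t e.2) then u e else 0 := by
      intro e he j k
      by_cases hjk : j = xs t e.1 ∧ k = xs t e.2
      · rw [if_pos hjk, hRhate t e he, if_pos hjk, hjk.1, hjk.2, huQ e he]
      · rw [if_neg hjk, hRhate t e he, if_neg hjk]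
    have hArm_eq : ∀ y : Fin N → Fin M, RhatArm t y =
        (∑ i, if y i = xs t i then v i else 0)
          + (∑ e ∈ E, if (y e.1 = xs t e.1 ∧ y e.2 = xs t e.2) then u e else 0) := by
      intro y
      rw [hRhatArm]
      congr 1
      · exact Finset.sum_congr rfl fun i _ => hRhat_eq i (y i)
      · exact Finset.sum_congr rfl fun e he => hRhate_eq e he (y e.1) (y e.2)
    have hArm0 : ∀ y : Fin N → Fin M, 0 ≤ RhatArm t y := by
      intro y
      rw [hArm_eq y]
      refine add_nonneg (Finset.sum_nonneg fun i _ => ?_) (Finset.sum_nonneg fun e he => ?_)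
      · split
        · exact hv0 i
        · exact le_rfl
      · split
        · exact hu0 e he
        · exact le_rfl
    set U : ℝ := ∑ i, v i with hU
    set V : ℝ := ∑ e ∈ E, u e with hV
    have hU0 : 0 ≤ U := Finset.sum_nonneg fun i _ => hv0 i
    have hV0 : 0 ≤ V := Finset.sum_nonneg fun e he => hu0 e he
    have hArmleUV : ∀ y : Fin N → Fin M, RhatArm t y ≤ U + V := by
      intro y
      rw [hArm_eq y, hU, hV]
      refine add_le_add (Finset.sum_le_sum fun i _ => ?_) (Finset.sum_le_sum fun e he => ?_)
      · split
        · exact le_rfl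
        · exact hv0 i
      · split
        · exact le_rfl
        · exact hu0 e he
    have hαArm : ∀ y : Fin N → Fin M, α * RhatArm t y ≤ 1 := by
      intro y
      have hUle : U ≤ (N:ℝ) * ((M:ℝ)/γ) := by
        rw [hU]
        calc ∑ i, v i ≤ ∑ _i : Fin N, (M:ℝ)/γ := Finset.sum_le_sum fun i _ => hv1 i
          _ = (N:ℝ) * ((M:ℝ)/γ) := by
            rw [Finset.sum_const, Finset.card_univ, Fintype.card_fin, nsmul_eq_mul]
      have hVle : V ≤ (E.card:ℝ) * ((M:ℝ)^2/γ) := by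
        rw [hV]
        calc ∑ e ∈ E, u e ≤ ∑ _e ∈ E, (M:ℝ)^2/γ := Finset.sum_le_sum fun e he => hu1 e he
          _ = (E.card:ℝ) * ((M:ℝ)^2/γ) := by rw [Finset.sum_const, nsmul_eq_mul]
      have h1 : RhatArm t y ≤ (N:ℝ)*((M:ℝ)/γ) + (E.card:ℝ)*((M:ℝ)^2/γ) :=
        le_trans (hArmleUV y) (add_le_add hUle hVle)
      have h2 : α * ((N:ℝ)*((M:ℝ)/γ) + (E.card:ℝ)*((M:ℝ)^2/γ)) = 1 := by
        rw [hα]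
        have hsum : (N:ℝ)*((M:ℝ)/γ) + (E.card:ℝ)*((M:ℝ)^2/γ)
            = ((M:ℝ) * ((N:ℝ) + (E.card:ℝ) * (M:ℝ))) / γ := by ring
        rw [hsum, div_mul_div_comm, mul_comm γ, div_self (ne_of_gt (mul_pos hden hγ0))]
      calc α * RhatArm t y ≤ α * ((N:ℝ)*((M:ℝ)/γ) + (E.card:ℝ)*((M:ℝ)^2/γ)) :=
            mul_le_mul_of_nonneg_left h1 hα0.le
        _ = 1 := h2
    -- first-moment identities
    have hpv : ∀ i, (∑ y : Fin N → Fin M, p t y * (if y i = xs t i then v i else 0))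
        = R t i (xs t i) := by
      intro i
      have h1 : ∀ y : Fin N → Fin M,
          p t y * (if y i = xs t i then v i else 0)
            = if y i = xs t i then p t y * v i else 0 := by
        intro y; split <;> simp
      rw [Finset.sum_congr rfl (fun y _ => h1 y), ← Finset.sum_filter, ← Finset.sum_mul]
      have h2 : (∑ y ∈ Finset.univ.filter (fun y : Fin N → Fin M => y i = xs t i), p t y)
          = Q1 i := by simp only [hQ1]
      rw [h2, mul_comm]
      exact hvQmul i
    have hpu : ∀ e ∈ E, (∑ y : Fin N → Fin M,
        p t y * (if (y e.1 = xs t e.1 ∧ y e.2 = xs t e.2) then u e else 0))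
        = Re t e (xs t e.1) (xs t e.2) := by
      intro e he
      have h1 : ∀ y : Fin N → Fin M,
          p t y * (if (y e.1 = xs t e.1 ∧ y e.2 = xs t e.2) then u e else 0)
            = if (y e.1 = xs t e.1 ∧ y e.2 = xs t e.2) then p t y * u e else 0 := by
        intro y; split <;> simp
      rw [Finset.sum_congr rfl (fun y _ => h1 y), ← Finset.sum_filter, ← Finset.sum_mul]
      have h2 : (∑ y ∈ Finset.univ.filter
            (fun y : Fin N → Fin M => y e.1 = xs t e.1 ∧ y e.2 = xs t e.2), p t y)
          = Q2 e := by simp only [hQ2]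
      rw [h2, mul_comm]
      exact huQmul e he
    set Act : ℝ := ∑ i, R t i (xs t i) + ∑ e ∈ E, Re t e (xs t e.1) (xs t e.2) with hActdef
    have hAct0 : 0 ≤ Act := by
      rw [hActdef]
      exact add_nonneg (Finset.sum_nonneg fun i _ => (hR t i _).1)
        (Finset.sum_nonneg fun e he => (hRe t e he _ _).1)
    have hActle : Act ≤ (N:ℝ) + (E.card:ℝ) := by
      rw [hActdef]
      refine add_le_add ?_ ?_
      · calc ∑ i, R t i (xs t i) ≤ ∑ _i : Fin N, (1:ℝ) :=
              Finset.sum_le_sum fun i _ => (hR t i _).2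
          _ = (N:ℝ) := by simp
      · calc ∑ e ∈ E, Re t e (xs t e.1) (xs t e.2) ≤ ∑ _e ∈ E, (1:ℝ) :=
              Finset.sum_le_sum fun e he => (hRe t e he _ _).2
          _ = (E.card:ℝ) := by simp
    have hpR : ∑ y : Fin N → Fin M, p t y * RhatArm t y = Act := by
      calc ∑ y : Fin N → Fin M, p t y * RhatArm t y
          = ∑ y : Fin N → Fin M, ((∑ i, p t y * (if y i = xs t i then v i else 0))
              + ∑ e ∈ E, p t y * (if (y e.1 = xs t e.1 ∧ y e.2 = xs t e.2) then u e else 0)) := by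
            refine Finset.sum_congr rfl fun y _ => ?_
            rw [hArm_eq y, mul_add, Finset.mul_sum, Finset.mul_sum]
        _ = (∑ y : Fin N → Fin M, ∑ i, p t y * (if y i = xs t i then v i else 0))
              + ∑ y : Fin N → Fin M, ∑ e ∈ E,
                  p t y * (if (y e.1 = xs t e.1 ∧ y e.2 = xs t e.2) then u e else 0) :=
            Finset.sum_add_distrib
        _ = (∑ i, ∑ y : Fin N → Fin M, p t y * (if y i = xs t i then v i else 0))
              + ∑ e ∈ E, ∑ y : Fin N → Fin M,
                  p t y * (if (y e.1 = xs t e.1 ∧ y e.2 = xs t e.2) then u e else 0) := by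
            rw [Finset.sum_comm, Finset.sum_comm (s := Finset.univ) (t := E)]
        _ = Act := by
            rw [hActdef]
            congr 1
            · exact Finset.sum_congr rfl fun i _ => hpv i
            · exact Finset.sum_congr rfl fun e he => hpu e he
    -- total sum of estimates
    have hSumArm : ∑ y : Fin N → Fin M, RhatArm t y
        = (M:ℝ)^(N-1) * U + (M:ℝ)^(N-2) * V := by
      calc ∑ y : Fin N → Fin M, RhatArm t y
          = (∑ y : Fin N → Fin M, ∑ i, if y i = xs t i then v i else 0)
              + ∑ y : Fin N → Fin M, ∑ e ∈ E,
                  if (y e.1 = xs t e.1 ∧ y e.2 = xs t e.2) then u e else 0 := by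
            rw [← Finset.sum_add_distrib]
            exact Finset.sum_congr rfl fun y _ => hArm_eq y
        _ = (∑ i, ∑ y : Fin N → Fin M, if y i = xs t i then v i else 0)
              + ∑ e ∈ E, ∑ y : Fin N → Fin M,
                  if (y e.1 = xs t e.1 ∧ y e.2 = xs t e.2) then u e else 0 := by
            rw [Finset.sum_comm, Finset.sum_comm (s := Finset.univ) (t := E)]
        _ = (M:ℝ)^(N-1) * U + (M:ℝ)^(N-2) * V := by
            congr 1
            · rw [hU, Finset.mul_sum]
              refine Finset.sum_congr rfl fun i _ => ?_
              rw [← Finset.sum_filter, Finset.sum_const, card_one_coord' i (xs t i),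
                nsmul_eq_mul]
              push_cast
              ring
            · rw [hV, Finset.mul_sum]
              refine Finset.sum_congr rfl fun e he => ?_
              rw [← Finset.sum_filter, Finset.sum_const,
                card_two_coord' (hE e he) (xs t e.1) (xs t e.2), nsmul_eq_mul]
              push_cast
              ring
    -- second moment bound
    have hB : ∑ y : Fin N → Fin M, p t y * (RhatArm t y)^2
        ≤ ((N:ℝ) + 2*(E.card:ℝ)) * U + (E.card:ℝ) * V := by
      have hexp : ∑ y : Fin N → Fin M, p t y * (RhatArm t y)^2
          = (∑ i, ∑ y : Fin N → Fin M,
              (p t y * RhatArm t y) * (if y i = xs t i then v i else 0))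
            + ∑ e ∈ E, ∑ y : Fin N → Fin M,
              (p t y * RhatArm t y) * (if (y e.1 = xs t e.1 ∧ y e.2 = xs t e.2)
                then u e else 0) := by
        have h0 : ∀ y : Fin N → Fin M, p t y * (RhatArm t y)^2
            = (∑ i, (p t y * RhatArm t y) * (if y i = xs t i then v i else 0))
              + ∑ e ∈ E, (p t y * RhatArm t y)
                  * (if (y e.1 = xs t e.1 ∧ y e.2 = xs t e.2) then u e else 0) := by
          intro y
          rw [← Finset.mul_sum, ← Finset.mul_sum, ← mul_add, ← hArm_eq y]
          ring
        calc ∑ y : Fin N → Fin M, p t y * (RhatArm t y)^2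
            = ∑ y : Fin N → Fin M,
                ((∑ i, (p t y * RhatArm t y) * (if y i = xs t i then v i else 0))
                  + ∑ e ∈ E, (p t y * RhatArm t y)
                      * (if (y e.1 = xs t e.1 ∧ y e.2 = xs t e.2) then u e else 0)) :=
              Finset.sum_congr rfl fun y _ => h0 y
          _ = (∑ y : Fin N → Fin M,
                ∑ i, (p t y * RhatArm t y) * (if y i = xs t i then v i else 0))
              + ∑ y : Fin N → Fin M, ∑ e ∈ E, (p t y * RhatArm t y)
                  * (if (y e.1 = xs t e.1 ∧ y e.2 = xs t e.2) then u e else 0) :=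
              Finset.sum_add_distrib
          _ = (∑ i, ∑ y : Fin N → Fin M,
              (p t y * RhatArm t y) * (if y i = xs t i then v i else 0))
            + ∑ e ∈ E, ∑ y : Fin N → Fin M,
              (p t y * RhatArm t y) * (if (y e.1 = xs t e.1 ∧ y e.2 = xs t e.2)
                then u e else 0) := by
              rw [Finset.sum_comm, Finset.sum_comm (s := Finset.univ) (t := E)]
      rw [hexp]
      have hterm1 : ∀ i, (∑ y : Fin N → Fin M,
          (p t y * RhatArm t y) * (if y i = xs t i then v i else 0))
          ≤ v i * ((N:ℝ) + (E.card:ℝ)) := by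
        intro i
        have h1 : ∀ y : Fin N → Fin M,
            (p t y * RhatArm t y) * (if y i = xs t i then v i else 0)
              = if y i = xs t i then (p t y * RhatArm t y) * v i else 0 := by
          intro y; split <;> simp
        rw [Finset.sum_congr rfl (fun y _ => h1 y), ← Finset.sum_filter, ← Finset.sum_mul]
        have h2 : (∑ y ∈ Finset.univ.filter (fun y : Fin N → Fin M => y i = xs t i),
            p t y * RhatArm t y) ≤ Act := by
          rw [← hpR]
          refine Finset.sum_le_sum_of_subset_of_nonneg (Finset.filter_subset _ _)
            fun y _ _ => mul_nonneg (hpp y).le (hArm0 y)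
        calc (∑ y ∈ Finset.univ.filter (fun y : Fin N → Fin M => y i = xs t i),
              p t y * RhatArm t y) * v i
            ≤ Act * v i := mul_le_mul_of_nonneg_right h2 (hv0 i)
          _ ≤ ((N:ℝ) + (E.card:ℝ)) * v i := mul_le_mul_of_nonneg_right hActle (hv0 i)
          _ = v i * ((N:ℝ) + (E.card:ℝ)) := mul_comm _ _
      have hterm2 : ∀ e ∈ E, (∑ y : Fin N → Fin M,
          (p t y * RhatArm t y) * (if (y e.1 = xs t e.1 ∧ y e.2 = xs t e.2) then u e else 0))
          ≤ Re t e (xs t e.1) (xs t e.2) * U + (E.card:ℝ) * u e := by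
        intro e he
        have h1 : ∀ y : Fin N → Fin M,
            (p t y * RhatArm t y) * (if (y e.1 = xs t e.1 ∧ y e.2 = xs t e.2) then u e else 0)
              = if (y e.1 = xs t e.1 ∧ y e.2 = xs t e.2)
                  then (p t y * RhatArm t y) * u e else 0 := by
          intro y; split <;> simp
        rw [Finset.sum_congr rfl (fun y _ => h1 y), ← Finset.sum_filter, ← Finset.sum_mul]
        -- inner sum bound
        have hinner : (∑ y ∈ Finset.univ.filter
              (fun y : Fin N → Fin M => y e.1 = xs t e.1 ∧ y e.2 = xs t e.2),
              p t y * RhatArm t y)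
            ≤ Q2 e * U + (E.card:ℝ) := by
          have harmpart : ∀ y : Fin N → Fin M,
              (∑ i, if y i = xs t i then v i else 0) ≤ U := by
            intro y
            rw [hU]
            refine Finset.sum_le_sum fun i _ => ?_
            split
            · exact le_rfl
            · exact hv0 i
          have hsplit : ∀ y : Fin N → Fin M, p t y * RhatArm t y
              ≤ p t y * U + ∑ e' ∈ E, p t y *
                (if (y e'.1 = xs t e'.1 ∧ y e'.2 = xs t e'.2) then u e' else 0) := by
            intro y
            rw [hArm_eq y, mul_add, ← Finset.mul_sum]
            exact add_le_add_left
              (mul_le_mul_of_nonneg_left (harmpart y) (hpp y).le) _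
          calc (∑ y ∈ Finset.univ.filter
                (fun y : Fin N → Fin M => y e.1 = xs t e.1 ∧ y e.2 = xs t e.2),
                p t y * RhatArm t y)
              ≤ ∑ y ∈ Finset.univ.filter
                  (fun y : Fin N → Fin M => y e.1 = xs t e.1 ∧ y e.2 = xs t e.2),
                  (p t y * U + ∑ e' ∈ E, p t y *
                    (if (y e'.1 = xs t e'.1 ∧ y e'.2 = xs t e'.2) then u e' else 0)) :=
                Finset.sum_le_sum fun y _ => hsplit y
            _ = (∑ y ∈ Finset.univ.filter
                  (fun y : Fin N → Fin M => y e.1 = xs t e.1 ∧ y e.2 = xs t e.2), p t y) * U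
                + ∑ y ∈ Finset.univ.filter
                    (fun y : Fin N → Fin M => y e.1 = xs t e.1 ∧ y e.2 = xs t e.2),
                    ∑ e' ∈ E, p t y *
                      (if (y e'.1 = xs t e'.1 ∧ y e'.2 = xs t e'.2) then u e' else 0) := by
                rw [Finset.sum_add_distrib, Finset.sum_mul]
            _ ≤ Q2 e * U + (E.card:ℝ) := by
                refine add_le_add ?_ ?_
                · have h2 : (∑ y ∈ Finset.univ.filter
                      (fun y : Fin N → Fin M => y e.1 = xs t e.1 ∧ y e.2 = xs t e.2), p t y)
                      = Q2 e := by simp only [hQ2]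
                  rw [h2]
                · have hsub : (∑ y ∈ Finset.univ.filter
                      (fun y : Fin N → Fin M => y e.1 = xs t e.1 ∧ y e.2 = xs t e.2),
                      ∑ e' ∈ E, p t y *
                        (if (y e'.1 = xs t e'.1 ∧ y e'.2 = xs t e'.2) then u e' else 0))
                      ≤ ∑ y : Fin N → Fin M, ∑ e' ∈ E, p t y *
                        (if (y e'.1 = xs t e'.1 ∧ y e'.2 = xs t e'.2) then u e' else 0) := by
                    refine Finset.sum_le_sum_of_subset_of_nonneg (Finset.filter_subset _ _)
                      fun y _ _ => Finset.sum_nonneg fun e' he' => ?_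
                    refine mul_nonneg (hpp y).le ?_
                    split
                    · exact hu0 e' he'
                    · exact le_rfl
                  refine le_trans hsub ?_
                  rw [Finset.sum_comm]
                  calc ∑ e' ∈ E, ∑ y : Fin N → Fin M, p t y *
                        (if (y e'.1 = xs t e'.1 ∧ y e'.2 = xs t e'.2) then u e' else 0)
                      = ∑ e' ∈ E, Re t e' (xs t e'.1) (xs t e'.2) :=
                        Finset.sum_congr rfl fun e' he' => hpu e' he'
                    _ ≤ ∑ _e' ∈ E, (1:ℝ) :=
                        Finset.sum_le_sum fun e' he' => (hRe t e' he' _ _).2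
                    _ = (E.card:ℝ) := by simp
        calc (∑ y ∈ Finset.univ.filter
              (fun y : Fin N → Fin M => y e.1 = xs t e.1 ∧ y e.2 = xs t e.2),
              p t y * RhatArm t y) * u e
            ≤ (Q2 e * U + (E.card:ℝ)) * u e :=
              mul_le_mul_of_nonneg_right hinner (hu0 e he)
          _ = (u e * Q2 e) * U + (E.card:ℝ) * u e := by ring
          _ = Re t e (xs t e.1) (xs t e.2) * U + (E.card:ℝ) * u e := by rw [huQmul e he]
      calc (∑ i, ∑ y : Fin N → Fin M,
            (p t y * RhatArm t y) * (if y i = xs t i then v i else 0))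
          + ∑ e ∈ E, ∑ y : Fin N → Fin M,
            (p t y * RhatArm t y) * (if (y e.1 = xs t e.1 ∧ y e.2 = xs t e.2)
              then u e else 0)
          ≤ (∑ i, v i * ((N:ℝ) + (E.card:ℝ)))
            + ∑ e ∈ E, (Re t e (xs t e.1) (xs t e.2) * U + (E.card:ℝ) * u e) :=
            add_le_add (Finset.sum_le_sum fun i _ => hterm1 i)
              (Finset.sum_le_sum fun e he => hterm2 e he)
        _ = U * ((N:ℝ) + (E.card:ℝ))
            + ((∑ e ∈ E, Re t e (xs t e.1) (xs t e.2)) * U + (E.card:ℝ) * V) := by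
            rw [hU, hV, Finset.sum_mul, Finset.sum_add_distrib, Finset.sum_mul,
              Finset.mul_sum]
        _ ≤ U * ((N:ℝ) + (E.card:ℝ)) + ((E.card:ℝ) * U + (E.card:ℝ) * V) := by
            have h1 : (∑ e ∈ E, Re t e (xs t e.1) (xs t e.2)) ≤ (E.card:ℝ) := by
              calc (∑ e ∈ E, Re t e (xs t e.1) (xs t e.2)) ≤ ∑ _e ∈ E, (1:ℝ) :=
                  Finset.sum_le_sum fun e he => (hRe t e he _ _).2
                _ = (E.card:ℝ) := by simp
            have := mul_le_mul_of_nonneg_right h1 hU0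
            linarith
        _ = ((N:ℝ) + 2*(E.card:ℝ)) * U + (E.card:ℝ) * V := by ring
    -- core numeric inequality
    have hc1 : (3/4) * α * ((N:ℝ) + 2*(E.card:ℝ)) ≤ γ / (M:ℝ) := by
      rw [hα, show (3:ℝ)/4 * (γ / ((M:ℝ) * ((N:ℝ) + (E.card:ℝ) * (M:ℝ)))) * ((N:ℝ) + 2*(E.card:ℝ))
          = ((3:ℝ)/4 * γ * ((N:ℝ) + 2*(E.card:ℝ))) / ((M:ℝ) * ((N:ℝ) + (E.card:ℝ) * (M:ℝ)))
          from by ring, div_le_div_iff₀ hden hM0]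
      have hA : (0:ℝ) ≤ γ*(M:ℝ)*(N:ℝ) := by positivity
      have hB' : (0:ℝ) ≤ γ*(E.card:ℝ)*(M:ℝ)*((M:ℝ)-3/2) :=
        mul_nonneg (mul_nonneg (mul_nonneg hγ0.le hcE0) hM0.le) (by linarith)
      nlinarith [hA, hB']
    have hc2 : (3/4) * α * (E.card:ℝ) ≤ γ / (M:ℝ)^2 := by
      rw [hα, show (3:ℝ)/4 * (γ / ((M:ℝ) * ((N:ℝ) + (E.card:ℝ) * (M:ℝ)))) * (E.card:ℝ)
          = ((3:ℝ)/4 * γ * (E.card:ℝ)) / ((M:ℝ) * ((N:ℝ) + (E.card:ℝ) * (M:ℝ)))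
          from by ring, div_le_div_iff₀ hden (by positivity : (0:ℝ) < (M:ℝ)^2)]
      have hA : (0:ℝ) ≤ γ*(M:ℝ)*(N:ℝ) := by positivity
      have hB' : (0:ℝ) ≤ γ*(E.card:ℝ)*(M:ℝ)^2 :=
        mul_nonneg (mul_nonneg hγ0.le hcE0) (pow_nonneg hM0.le 2)
      nlinarith [hA, hB']
    have hr1 : γ/(M:ℝ)^N * (M:ℝ)^(N-1) = γ/(M:ℝ) := by
      rw [hpow1]; field_simp
    have hr2 : γ/(M:ℝ)^N * (M:ℝ)^(N-2) = γ/(M:ℝ)^2 := by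
      rw [hpow2]; field_simp
    have hcore : (3/4) * α^2 * (((N:ℝ) + 2*(E.card:ℝ)) * U + (E.card:ℝ) * V)
        ≤ α * (γ/(M:ℝ)^N) * ((M:ℝ)^(N-1) * U + (M:ℝ)^(N-2) * V) := by
      have e1 : (3/4) * α * ((N:ℝ) + 2*(E.card:ℝ)) * U ≤ (γ/(M:ℝ)) * U :=
        mul_le_mul_of_nonneg_right hc1 hU0
      have e2 : (3/4) * α * (E.card:ℝ) * V ≤ (γ/(M:ℝ)^2) * V :=
        mul_le_mul_of_nonneg_right hc2 hV0
      calc (3/4) * α^2 * (((N:ℝ) + 2*(E.card:ℝ)) * U + (E.card:ℝ) * V)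
          = α * ((3/4) * α * ((N:ℝ) + 2*(E.card:ℝ)) * U)
            + α * ((3/4) * α * (E.card:ℝ) * V) := by ring
        _ ≤ α * ((γ/(M:ℝ)) * U) + α * ((γ/(M:ℝ)^2) * V) :=
            add_le_add (mul_le_mul_of_nonneg_left e1 hα0.le)
              (mul_le_mul_of_nonneg_left e2 hα0.le)
        _ = α * (γ/(M:ℝ)^N) * ((M:ℝ)^(N-1) * U + (M:ℝ)^(N-2) * V) := by
            rw [show α * (γ/(M:ℝ)^N) * ((M:ℝ)^(N-1) * U + (M:ℝ)^(N-2) * V)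
              = α * ((γ/(M:ℝ)^N * (M:ℝ)^(N-1)) * U) + α * ((γ/(M:ℝ)^N * (M:ℝ)^(N-2)) * V)
              from by ring, hr1, hr2]
    -- exponential step
    have hrec : ∑ y : Fin N → Fin M, w ((t:ℕ)+1) y
        = ∑ y : Fin N → Fin M, w (t:ℕ) y * Real.exp (α * RhatArm t y) :=
      Finset.sum_congr rfl fun y _ => hwrec t y
    set g : (Fin N → Fin M) → ℝ :=
      fun y => α * RhatArm t y + (3/4) * (α * RhatArm t y)^2 with hg
    have hstep1 : ∑ y : Fin N → Fin M, w (t:ℕ) y * Real.exp (α * RhatArm t y)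
        ≤ (∑ z : Fin N → Fin M, w (t:ℕ) z) + ∑ y : Fin N → Fin M, w (t:ℕ) y * g y := by
      have h1 : ∀ y : Fin N → Fin M,
          w (t:ℕ) y * Real.exp (α * RhatArm t y) ≤ w (t:ℕ) y * (1 + g y) := by
        intro y
        refine mul_le_mul_of_nonneg_left ?_ (hwpos _ htT y).le
        have := exp_le_quad' (mul_nonneg hα0.le (hArm0 y)) (hαArm y)
        simp only [hg]
        linarith
      calc ∑ y : Fin N → Fin M, w (t:ℕ) y * Real.exp (α * RhatArm t y)
          ≤ ∑ y : Fin N → Fin M, w (t:ℕ) y * (1 + g y) :=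
            Finset.sum_le_sum fun y _ => h1 y
        _ = (∑ z : Fin N → Fin M, w (t:ℕ) z) + ∑ y : Fin N → Fin M, w (t:ℕ) y * g y := by
            rw [← Finset.sum_add_distrib]
            exact Finset.sum_congr rfl fun y _ => by ring
    have hwform : ∀ y : Fin N → Fin M, (1-γ) * w (t:ℕ) y
        = (p t y - γ/(M:ℝ)^N) * (∑ z : Fin N → Fin M, w (t:ℕ) z) := by
      intro y
      have hpc : p t y - γ/(M:ℝ)^N
          = (1-γ) * (w (t:ℕ) y / ∑ z : Fin N → Fin M, w (t:ℕ) z) := by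
        rw [hp]; ring
      rw [hpc, mul_assoc, div_mul_cancel₀ _ (ne_of_gt hW0)]
    have hup : (1-γ) * ∑ y : Fin N → Fin M, w (t:ℕ) y * g y
        = (∑ z : Fin N → Fin M, w (t:ℕ) z)
          * ∑ y : Fin N → Fin M, (p t y - γ/(M:ℝ)^N) * g y := by
      rw [Finset.mul_sum, Finset.mul_sum]
      refine Finset.sum_congr rfl fun y _ => ?_
      calc (1-γ) * (w (t:ℕ) y * g y) = ((1-γ) * w (t:ℕ) y) * g y := by ring
        _ = ((p t y - γ/(M:ℝ)^N) * (∑ z : Fin N → Fin M, w (t:ℕ) z)) * g y := by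
            rw [hwform y]
        _ = (∑ z : Fin N → Fin M, w (t:ℕ) z) * ((p t y - γ/(M:ℝ)^N) * g y) := by ring
    have hgsum : ∑ y : Fin N → Fin M, (p t y - γ/(M:ℝ)^N) * g y ≤ α * Act := by
      have h1 : ∀ y : Fin N → Fin M, (p t y - γ/(M:ℝ)^N) * g y
          ≤ α * (p t y * RhatArm t y) + (3/4)*α^2 * (p t y * (RhatArm t y)^2)
            - α * (γ/(M:ℝ)^N) * RhatArm t y := by
        intro y
        have e : (p t y - γ/(M:ℝ)^N) * g y
            = α * (p t y * RhatArm t y) + (3/4)*α^2 * (p t y * (RhatArm t y)^2)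
              - α * (γ/(M:ℝ)^N) * RhatArm t y
              - (γ/(M:ℝ)^N) * ((3/4) * (α * RhatArm t y)^2) := by
          simp only [hg]; ring
        have e2 : 0 ≤ (γ/(M:ℝ)^N) * ((3/4) * (α * RhatArm t y)^2) := by positivity
        linarith
      have h2 : ∑ y : Fin N → Fin M,
          (α * (p t y * RhatArm t y) + (3/4)*α^2 * (p t y * (RhatArm t y)^2)
            - α * (γ/(M:ℝ)^N) * RhatArm t y)
          = α * Act + (3/4)*α^2 * (∑ y : Fin N → Fin M, p t y * (RhatArm t y)^2)
            - α * (γ/(M:ℝ)^N) * (∑ y : Fin N → Fin M, RhatArm t y) := by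
        rw [Finset.sum_sub_distrib, Finset.sum_add_distrib, ← Finset.mul_sum, ← Finset.mul_sum,
          ← Finset.mul_sum, hpR]
      have h3 : (3/4)*α^2 * (∑ y : Fin N → Fin M, p t y * (RhatArm t y)^2)
          ≤ α * (γ/(M:ℝ)^N) * (∑ y : Fin N → Fin M, RhatArm t y) := by
        calc (3/4)*α^2 * (∑ y : Fin N → Fin M, p t y * (RhatArm t y)^2)
            ≤ (3/4)*α^2 * (((N:ℝ) + 2*(E.card:ℝ)) * U + (E.card:ℝ) * V) :=
              mul_le_mul_of_nonneg_left hB (by positivity)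
          _ ≤ α * (γ/(M:ℝ)^N) * ((M:ℝ)^(N-1) * U + (M:ℝ)^(N-2) * V) := hcore
          _ = α * (γ/(M:ℝ)^N) * (∑ y : Fin N → Fin M, RhatArm t y) := by rw [hSumArm]
      have h4 := Finset.sum_le_sum (fun y (_ : y ∈ (Finset.univ : Finset (Fin N → Fin M))) => h1 y)
      rw [h2] at h4
      linarith
    have hWt1pos : 0 < ∑ y : Fin N → Fin M, w ((t:ℕ)+1) y :=
      hWpos _ (Nat.succ_le_of_lt t.isLt)
    have hD0 : 0 ≤ α/(1-γ) * Act := mul_nonneg (div_nonneg hα0.le h1γ.le) hAct0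
    have hfinal1 : ∑ y : Fin N → Fin M, w ((t:ℕ)+1) y
        ≤ (∑ z : Fin N → Fin M, w (t:ℕ) z) * (1 + α/(1-γ) * Act) := by
      rw [hrec]
      have h6 : (∑ z : Fin N → Fin M, w (t:ℕ) z)
            * (∑ y : Fin N → Fin M, (p t y - γ/(M:ℝ)^N) * g y)
          ≤ (∑ z : Fin N → Fin M, w (t:ℕ) z) * (α * Act) :=
        mul_le_mul_of_nonneg_left hgsum hW0.le
      have h4 : ∑ y : Fin N → Fin M, w (t:ℕ) y * g y
          ≤ (∑ z : Fin N → Fin M, w (t:ℕ) z) * (α * Act) / (1-γ) := by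
        rw [le_div_iff₀ h1γ]
        calc (∑ y : Fin N → Fin M, w (t:ℕ) y * g y) * (1-γ)
            = (1-γ) * ∑ y : Fin N → Fin M, w (t:ℕ) y * g y := by ring
          _ = (∑ z : Fin N → Fin M, w (t:ℕ) z)
              * ∑ y : Fin N → Fin M, (p t y - γ/(M:ℝ)^N) * g y := hup
          _ ≤ (∑ z : Fin N → Fin M, w (t:ℕ) z) * (α * Act) := h6
      calc ∑ y : Fin N → Fin M, w (t:ℕ) y * Real.exp (α * RhatArm t y)
          ≤ (∑ z : Fin N → Fin M, w (t:ℕ) z) + ∑ y : Fin N → Fin M, w (t:ℕ) y * g y :=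
            hstep1
        _ ≤ (∑ z : Fin N → Fin M, w (t:ℕ) z)
            + (∑ z : Fin N → Fin M, w (t:ℕ) z) * (α * Act) / (1-γ) := by linarith
        _ = (∑ z : Fin N → Fin M, w (t:ℕ) z) * (1 + α/(1-γ) * Act) := by
            field_simp
    have hpos2 : 0 < (∑ z : Fin N → Fin M, w (t:ℕ) z) * (1 + α/(1-γ) * Act) :=
      mul_pos hW0 (by linarith)
    have h7 : Real.log (∑ y : Fin N → Fin M, w ((t:ℕ)+1) y)
        ≤ Real.log ((∑ z : Fin N → Fin M, w (t:ℕ) z) * (1 + α/(1-γ) * Act)) :=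
      (Real.log_le_log_iff hWt1pos hpos2).2 hfinal1
    rw [Real.log_mul (ne_of_gt hW0) (by linarith : (1:ℝ) + α/(1-γ) * Act ≠ 0)] at h7
    have h8 : Real.log (1 + α/(1-γ) * Act) ≤ α/(1-γ) * Act := by
      have := Real.log_le_sub_one_of_pos (show (0:ℝ) < 1 + α/(1-γ) * Act by linarith)
      linarith
    linarith
  -- assemble over time
  have htele : Real.log ((∑ y : Fin N → Fin M, w T y) / (∑ y : Fin N → Fin M, w 0 y))
      = ∑ n ∈ Finset.range T,
          (Real.log (∑ y : Fin N → Fin M, w (n+1) y)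
            - Real.log (∑ y : Fin N → Fin M, w n y)) := by
    rw [Finset.sum_range_sub (fun n => Real.log (∑ y : Fin N → Fin M, w n y)) T]
    rw [Real.log_div (ne_of_gt (hWpos T le_rfl)) (ne_of_gt (hWpos 0 (by omega)))]
  have hmain : Real.log ((∑ y : Fin N → Fin M, w T y) / (∑ y : Fin N → Fin M, w 0 y))
      ≤ α/(1-γ) * ∑ t : Fin T,
          (∑ i, R t i (xs t i) + ∑ e ∈ E, Re t e (xs t e.1) (xs t e.2)) := by
    rw [htele, ← Fin.sum_univ_eq_sum_range
      (fun n => Real.log (∑ y : Fin N → Fin M, w (n+1) y)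
        - Real.log (∑ y : Fin N → Fin M, w n y)) T, Finset.mul_sum]
    exact Finset.sum_le_sum fun t _ => key t
  have hArm0' : ∀ (t : Fin T) (y : Fin N → Fin M), 0 ≤ RhatArm t y := by
    intro t y
    have hW0 : 0 < ∑ z : Fin N → Fin M, w (t:ℕ) z := hWpos _ t.isLt.le
    have hpp : ∀ z : Fin N → Fin M, 0 ≤ p t z := by
      intro z
      rw [hp]
      have h1 : 0 ≤ (1-γ) * (w (t:ℕ) z / ∑ z' : Fin N → Fin M, w (t:ℕ) z') :=
        mul_nonneg h1γ.le (div_nonneg (hwpos _ t.isLt.le z).le hW0.le)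
      have h2 : (0:ℝ) ≤ γ / (M:ℝ)^N := by positivity
      linarith
    rw [hRhatArm]
    refine add_nonneg (Finset.sum_nonneg fun i _ => ?_)
      (Finset.sum_nonneg fun e he => ?_)
    · rw [hRhat]
      split
      · exact div_nonneg (hR t i _).1 (Finset.sum_nonneg fun z _ => hpp z)
      · exact le_rfl
    · rw [hRhate t e he]
      split
      · exact div_nonneg (hRe t e he _ _).1 (Finset.sum_nonneg fun z _ => hpp z)
      · exact le_rfl
  have hsec : 0 ≤ (Real.exp 1 - 2) * α ^ 2 / (1 - γ) * ((E.card : ℝ) / (M : ℝ) ^ (N - 2))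
      * ∑ t : Fin T, ∑ y : Fin N → Fin M, RhatArm t y := by
    have he2 : 0 ≤ Real.exp 1 - 2 := by
      have := Real.add_one_le_exp 1
      linarith
    refine mul_nonneg (mul_nonneg (div_nonneg (mul_nonneg he2 (sq_nonneg α)) h1γ.le)
      (div_nonneg hcE0 (by positivity))) ?_
    exact Finset.sum_nonneg fun t _ => Finset.sum_nonneg fun y _ => hArm0' t y
  linarith
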